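/- Let (s_n)_{n≥0} be a real sequence and n₀ ≥ 1 an integer such that the Hankel determinants satisfy D_n > 0 for all n ≤ n₀ − 1 and D_{n₀} = 0. Then the Hankel matrix H_{n₀} = (s_{i+j})_{0≤i,j≤n₀} is positive semi-definite. -/

import Mathlib

open Matrix

private lemma psd_posDef_of_det_ne_zero {n : ℕ} {M : Matrix (Fin n) (Fin n) ℝ}
    (hM : M.PosSemidef) (hd : M.det ≠ 0) : M.PosDef := by
  refine posDef_iff_dotProduct_mulVec.mpr ⟨hM.1, fun x hx => ?_⟩
  rcases lt_or_eq_of_le (hM.dotProduct_mulVec_nonneg x) with h | h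
  · exact h
  · exfalso
    have h0 : M *ᵥ x = 0 := (hM.dotProduct_mulVec_zero_iff x).mp h.symm
    have : x = 0 := by
      have hinv : IsUnit M := (Matrix.isUnit_iff_isUnit_det M).mpr (isUnit_iff_ne_zero.mpr hd)
      have := hinv.invertible
      have := congrArg (fun v => M⁻¹ *ᵥ v) h0
      simpa [Matrix.mulVec_mulVec, Matrix.nonsing_inv_mul M (isUnit_iff_ne_zero.mpr hd)] using this
    exact hx this

private lemma fin1_posSemidef {c : Matrix (Fin 1) (Fin 1) ℝ} (hc : 0 ≤ c 0 0) :
    c.PosSemidef := by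
  rw [posSemidef_iff_dotProduct_mulVec]
  constructor
  · ext i j; fin_cases i; fin_cases j; simp [Matrix.conjTranspose_apply]
  · intro x
    have : star x ⬝ᵥ c *ᵥ x = c 0 0 * (x 0 * x 0) := by
      simp [dotProduct, Matrix.mulVec, Fin.sum_univ_one]; ring
    rw [this]
    exact mul_nonneg hc (mul_self_nonneg _)

private lemma hankel_block_eq (s : ℕ → ℝ) (n : ℕ) :
    (Matrix.of fun i j : Fin (n + 1 + 1) => s (i.1 + j.1)).submatrix finSumFinEquiv finSumFinEquiv
      = Matrix.fromBlocks (Matrix.of fun i j : Fin (n + 1) => s (i.1 + j.1))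
          (Matrix.of fun (i : Fin (n + 1)) (_ : Fin 1) => s (i.1 + (n + 1)))
          (Matrix.of fun (i : Fin (n + 1)) (_ : Fin 1) => s (i.1 + (n + 1)))ᴴ
          (Matrix.of fun (_ _ : Fin 1) => s (n + 1 + (n + 1))) := by
  ext i j
  cases i with
  | inl i =>
    cases j with
    | inl j => simp [Matrix.submatrix, Matrix.fromBlocks]
    | inr j => fin_cases j; simp [Matrix.submatrix, Matrix.fromBlocks]
  | inr i =>
    fin_cases i
    cases j with
    | inl j => simp [Matrix.submatrix, Matrix.fromBlocks, Matrix.conjTranspose_apply, add_comm]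
    | inr j => fin_cases j; simp [Matrix.submatrix, Matrix.fromBlocks]

private lemma hankel_posDef (s : ℕ → ℝ) :
    ∀ n : ℕ, (∀ k ≤ n, 0 < (Matrix.of fun i j : Fin (k + 1) => s (i.1 + j.1)).det) →
      (Matrix.of fun i j : Fin (n + 1) => s (i.1 + j.1)).PosDef := by
  intro n
  induction n with
  | zero =>
    intro h
    have h0 := h 0 le_rfl
    rw [Matrix.det_fin_one] at h0
    refine posDef_iff_dotProduct_mulVec.mpr ⟨?_, fun x hx => ?_⟩
    · ext i j; fin_cases i; fin_cases j; simp [Matrix.conjTranspose_apply]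
    · have hx0 : x 0 ≠ 0 := by
        intro h'; apply hx; ext i; fin_cases i; exact h'
      have : star x ⬝ᵥ (Matrix.of fun i j : Fin 1 => s (i.1 + j.1)) *ᵥ x
          = s 0 * (x 0 * x 0) := by
        simp [dotProduct, Matrix.mulVec, Fin.sum_univ_one]; ring
      rw [this]
      exact mul_pos h0 (mul_self_pos.mpr hx0)
  | succ n ih =>
    intro h
    set A := (Matrix.of fun i j : Fin (n + 1) => s (i.1 + j.1)) with hAdef
    set B := (Matrix.of fun (i : Fin (n + 1)) (_ : Fin 1) => s (i.1 + (n + 1))) with hBdef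
    set D := (Matrix.of fun (_ _ : Fin 1) => s (n + 1 + (n + 1))) with hDdef
    have hA : A.PosDef := ih (fun k hk => h k (hk.trans (Nat.le_succ n)))
    haveI := hA.isUnit.invertible
    have hdet := h (n + 1) le_rfl
    have hsub : ((Matrix.of fun i j : Fin (n + 1 + 1) => s (i.1 + j.1)).submatrix
        finSumFinEquiv finSumFinEquiv).det
        = (Matrix.of fun i j : Fin (n + 1 + 1) => s (i.1 + j.1)).det :=
      Matrix.det_submatrix_equiv_self _ _
    rw [hankel_block_eq, Matrix.det_fromBlocks₁₁, Matrix.invOf_eq_nonsing_inv,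
      ← hAdef, ← hBdef, ← hDdef] at hsub
    have hS : 0 < (D - Bᴴ * A⁻¹ * B).det := by
      by_contra hc
      push_neg at hc
      have := mul_nonpos_of_nonneg_of_nonpos hA.det_pos.le hc
      rw [hsub] at this
      exact absurd hdet (not_lt.mpr this)
    have hSpsd : (D - Bᴴ * A⁻¹ * B).PosSemidef := by
      apply fin1_posSemidef
      have h00 := hS.le
      rw [Matrix.det_fin_one] at h00
      exact h00
    have hfb := (Matrix.PosDef.fromBlocks₁₁ B D hA).mpr hSpsd
    rw [← hankel_block_eq] at hfb
    have hpsd := (Matrix.posSemidef_submatrix_equiv finSumFinEquiv).mp hfb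
    exact psd_posDef_of_det_ne_zero hpsd (ne_of_gt hdet)

/-- If the Hankel determinants of a real sequence satisfy `D n > 0` for `n ≤ n₀ - 1`
and `D n₀ = 0`, then the Hankel matrix `H n₀` is positive semi-definite. -/
theorem hankel_posSemidef_at_first_zero (s : ℕ → ℝ) (n₀ : ℕ) (hn₀ : 1 ≤ n₀)
    (hpos : ∀ n ≤ n₀ - 1, 0 < (Matrix.of fun i j : Fin (n + 1) => s (i.1 + j.1)).det)
    (hzero : (Matrix.of fun i j : Fin (n₀ + 1) => s (i.1 + j.1)).det = 0) :
    (Matrix.of fun i j : Fin (n₀ + 1) => s (i.1 + j.1)).PosSemidef := by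
  obtain ⟨m, rfl⟩ : ∃ m, n₀ = m + 1 := ⟨n₀ - 1, (Nat.succ_pred_eq_of_pos hn₀).symm⟩
  simp only [Nat.add_sub_cancel] at hpos
  set A := (Matrix.of fun i j : Fin (m + 1) => s (i.1 + j.1)) with hAdef
  set B := (Matrix.of fun (i : Fin (m + 1)) (_ : Fin 1) => s (i.1 + (m + 1))) with hBdef
  set D := (Matrix.of fun (_ _ : Fin 1) => s (m + 1 + (m + 1))) with hDdef
  have hA : A.PosDef := hankel_posDef s m hpos
  haveI := hA.isUnit.invertible
  have hsub : ((Matrix.of fun i j : Fin (m + 1 + 1) => s (i.1 + j.1)).submatrix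
      finSumFinEquiv finSumFinEquiv).det
      = (Matrix.of fun i j : Fin (m + 1 + 1) => s (i.1 + j.1)).det :=
    Matrix.det_submatrix_equiv_self _ _
  rw [hankel_block_eq, Matrix.det_fromBlocks₁₁, Matrix.invOf_eq_nonsing_inv,
    ← hAdef, ← hBdef, ← hDdef, hzero] at hsub
  have hS0 : (D - Bᴴ * A⁻¹ * B).det = 0 := by
    rcases mul_eq_zero.mp hsub with h | h
    · exact absurd h (ne_of_gt hA.det_pos)
    · exact h
  have hSpsd : (D - Bᴴ * A⁻¹ * B).PosSemidef := by
    apply fin1_posSemidef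
    rw [Matrix.det_fin_one] at hS0
    exact le_of_eq hS0.symm
  have hfb := (Matrix.PosDef.fromBlocks₁₁ B D hA).mpr hSpsd
  rw [← hankel_block_eq] at hfb
  exact (Matrix.posSemidef_submatrix_equiv finSumFinEquiv).mp hfb
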